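/- Consider a hidden Markov (non-unifilar finite-state) source with s states: P(x^n) = ∑_{z_2,...,z_{n+1}} ∏_{i=1}^n P(x_i, z_{i+1} | z_i) with fixed initial state z_1. Let ℓ divide n, m = n/ℓ, and let Ĥ_ℓ(x^n) be the empirical entropy (in bits) of the non-overlapping ℓ-blocks of x^n. Then -log₂ P(x^n) ≥ m·[Ĥ_ℓ(x^n) - log₂(s³e)]. -/

import Mathlib

open Finset

section HMM
variable {X Z : Type*} [Fintype X] [Fintype Z] [DecidableEq Z]
variable (T : Z → X → Z → ℝ)

noncomputable def hmmG : ℕ → Z → (ℕ → X) → Z → ℝ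
  | 0, z, _, z' => if z = z' then 1 else 0
  | n+1, z, a, z' => ∑ w : Z, T z (a 0) w * hmmG n w (fun t => a (t+1)) z'

lemma hmmG_nonneg (hT0 : ∀ z a z', 0 ≤ T z a z') :
    ∀ (n : ℕ) (z : Z) (a : ℕ → X) (z' : Z), 0 ≤ hmmG T n z a z' := by
  intro n
  induction n with
  | zero => intro z a z'; simp [hmmG]; positivity
  | succ n ih =>
      intro z a z'
      exact Finset.sum_nonneg fun w _ => mul_nonneg (hT0 _ _ _) (ih _ _ _)

lemma hmmG_congr : ∀ (n : ℕ) (z : Z) (a b : ℕ → X) (z' : Z),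
    (∀ t < n, a t = b t) → hmmG T n z a z' = hmmG T n z b z' := by
  intro n
  induction n with
  | zero => intro z a b z' _; rfl
  | succ n ih =>
      intro z a b z' h
      simp only [hmmG]
      refine Finset.sum_congr rfl fun w _ => ?_
      rw [h 0 (Nat.succ_pos n), ih w _ _ z' fun t ht => h (t+1) (by omega)]

lemma hmmG_split : ∀ (p q : ℕ) (z : Z) (a : ℕ → X) (z' : Z),
    hmmG T (p + q) z a z' = ∑ w : Z, hmmG T p z a w * hmmG T q w (fun t => a (p + t)) z' := by
  intro p
  induction p with
  | zero =>
      intro q z a z'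
      rw [Nat.zero_add]
      simp only [hmmG]
      rw [Finset.sum_eq_single z]
      · rw [if_pos rfl, one_mul]
        exact (hmmG_congr T q z _ a z' fun t ht => by rw [Nat.zero_add]).symm
      · intro w _ hw; simp [Ne.symm hw]
      · simp
  | succ p ih =>
      intro q z a z'
      rw [Nat.succ_add]
      simp only [hmmG]
      calc ∑ w : Z, T z (a 0) w * hmmG T (p + q) w (fun t => a (t + 1)) z'
          = ∑ w : Z, ∑ u : Z, T z (a 0) w *
              (hmmG T p w (fun t => a (t + 1)) u *
                hmmG T q u (fun t => a (p + 1 + t)) z') := by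
            refine Finset.sum_congr rfl fun w _ => ?_
            rw [ih q w (fun t => a (t + 1)) z', Finset.mul_sum]
            refine Finset.sum_congr rfl fun u _ => ?_
            have := hmmG_congr T q u (fun t => a (p + t + 1)) (fun t => a (p + 1 + t)) z'
              (fun t ht => by show a (p + t + 1) = a (p + 1 + t); rw [Nat.add_right_comm])
            rw [this]
        _ = ∑ u : Z, (∑ w : Z, T z (a 0) w * hmmG T p w (fun t => a (t + 1)) u) *
              hmmG T q u (fun t => a (p + 1 + t)) z' := by
            rw [Finset.sum_comm]
            simp [Finset.sum_mul, mul_assoc]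

lemma hmm_cons_sum : ∀ (n : ℕ) (y : ℕ → X) (z : Z),
    (∑ zs : Fin n → Z, ∏ i : Fin n,
      T ((Fin.cons z zs : Fin (n+1) → Z) i.castSucc) (y i.val)
        ((Fin.cons z zs : Fin (n+1) → Z) i.succ))
    = ∑ z' : Z, hmmG T n z y z' := by
  intro n
  induction n with
  | zero => intro y z; simp [hmmG]
  | succ n ih =>
      intro y z
      rw [← Equiv.sum_comp (Fin.consEquiv (fun _ : Fin (n+1) => Z))]
      rw [Fintype.sum_prod_type]
      have hce : ∀ (w : Z) (zs' : Fin n → Z),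
          (Fin.consEquiv (fun _ : Fin (n+1) => Z)) (w, zs') = Fin.cons w zs' := fun _ _ => rfl
      simp only [hce]
      have key : ∀ (w : Z) (zs' : Fin n → Z),
          (∏ i : Fin (n+1),
            T ((Fin.cons z (Fin.cons w zs') : Fin (n+2) → Z) i.castSucc) (y i.val)
              ((Fin.cons z (Fin.cons w zs') : Fin (n+2) → Z) i.succ))
          = T z (y 0) w * ∏ i : Fin n,
              T ((Fin.cons w zs' : Fin (n+1) → Z) i.castSucc) (y (i.val + 1))
                ((Fin.cons w zs' : Fin (n+1) → Z) i.succ) := by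
        intro w zs'
        rw [Fin.prod_univ_succ]
        have h0 : T ((Fin.cons z (Fin.cons w zs') : Fin (n+2) → Z) (Fin.castSucc 0)) (y (0 : Fin (n+1)).val)
            ((Fin.cons z (Fin.cons w zs') : Fin (n+2) → Z) (Fin.succ 0)) = T z (y 0) w := by
          simp
        rw [h0]
        refine congrArg (fun r => T z (y 0) w * r) ?_
        refine Finset.prod_congr rfl fun i _ => ?_
        have h1 : (i.succ.castSucc : Fin (n+2)) = (i.castSucc).succ := by
          simp [Fin.ext_iff]
        rw [h1]
        simp [Fin.cons_succ]
      calc (∑ w : Z, ∑ zs' : Fin n → Z, ∏ i : Fin (n+1),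
            T ((Fin.cons z (Fin.cons w zs') : Fin (n+2) → Z) i.castSucc) (y i.val)
              ((Fin.cons z (Fin.cons w zs') : Fin (n+2) → Z) i.succ))
          = ∑ w : Z, T z (y 0) w * ∑ zs' : Fin n → Z, ∏ i : Fin n,
              T ((Fin.cons w zs' : Fin (n+1) → Z) i.castSucc) (y (i.val + 1))
                ((Fin.cons w zs' : Fin (n+1) → Z) i.succ) := by
            refine Finset.sum_congr rfl fun w _ => ?_
            rw [Finset.mul_sum]
            exact Finset.sum_congr rfl fun zs' _ => key w zs'
        _ = ∑ w : Z, T z (y 0) w * ∑ z' : Z, hmmG T n w (fun t => y (t + 1)) z' := by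
            refine Finset.sum_congr rfl fun w _ => ?_
            rw [ih (fun t => y (t + 1)) w]
        _ = ∑ z' : Z, hmmG T (n+1) z y z' := by
            simp only [hmmG, Finset.mul_sum]
            rw [Finset.sum_comm]

lemma hmm_stoch [DecidableEq X] (hT1 : ∀ z, ∑ a : X, ∑ z' : Z, T z a z' = 1) (d : X) :
    ∀ (n : ℕ) (z : Z),
    ∑ b : Fin n → X, ∑ z' : Z,
      hmmG T n z (fun t => if h : t < n then b ⟨t, h⟩ else d) z' = 1 := by
  intro n
  induction n with
  | zero => simp [hmmG]
  | succ n ih =>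
      intro z
      rw [← Equiv.sum_comp (Fin.consEquiv (fun _ : Fin (n+1) => X))]
      rw [Fintype.sum_prod_type]
      have hce : ∀ (x0 : X) (b : Fin n → X),
          (Fin.consEquiv (fun _ : Fin (n+1) => X)) (x0, b) = Fin.cons x0 b := fun _ _ => rfl
      simp only [hce]
      have key : ∀ (x0 : X) (b : Fin n → X) (z' : Z),
          hmmG T (n+1) z (fun t => if h : t < n+1 then (Fin.cons x0 b : Fin (n+1) → X) ⟨t, h⟩ else d) z'
          = ∑ w : Z, T z x0 w * hmmG T n w (fun t => if h : t < n then b ⟨t, h⟩ else d) z' := by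
        intro x0 b z'
        simp only [hmmG]
        refine Finset.sum_congr rfl fun w _ => ?_
        have h0 : (Fin.cons x0 b : Fin (n+1) → X) ⟨0, Nat.succ_pos n⟩ = x0 := by
          have h00 : (⟨0, Nat.succ_pos n⟩ : Fin (n+1)) = 0 := rfl
          rw [h00, Fin.cons_zero]
        rw [dif_pos (Nat.succ_pos n), h0]
        congr 1
        refine hmmG_congr T n w _ _ z' fun t ht => ?_
        rw [dif_pos (by omega : t + 1 < n + 1), dif_pos ht]
        have h2 : (Fin.cons x0 b : Fin (n+1) → X) ⟨t + 1, by omega⟩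
            = (Fin.cons x0 b : Fin (n+1) → X) (Fin.succ ⟨t, ht⟩) := by
          congr 1
        rw [h2, Fin.cons_succ]
      calc (∑ x0 : X, ∑ b : Fin n → X, ∑ z' : Z,
            hmmG T (n+1) z (fun t => if h : t < n+1 then (Fin.cons x0 b : Fin (n+1) → X) ⟨t, h⟩ else d) z')
          = ∑ x0 : X, ∑ b : Fin n → X, ∑ w : Z, T z x0 w *
              ∑ z' : Z, hmmG T n w (fun t => if h : t < n then b ⟨t, h⟩ else d) z' := by
            refine Finset.sum_congr rfl fun x0 _ => Finset.sum_congr rfl fun b _ => ?_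
            simp only [key]
            rw [Finset.sum_comm]
            exact Finset.sum_congr rfl fun w _ => (Finset.mul_sum ..).symm
        _ = ∑ x0 : X, ∑ w : Z, T z x0 w := by
            refine Finset.sum_congr rfl fun x0 _ => ?_
            rw [Finset.sum_comm]
            refine Finset.sum_congr rfl fun w _ => ?_
            rw [← Finset.mul_sum, ih w, mul_one]
        _ = 1 := hT1 z

lemma hmm_blocks (hT0 : ∀ z a z', 0 ≤ T z a z') (ℓ : ℕ) :
    ∀ (m : ℕ) (y : ℕ → X) (z : Z),
    (∑ z' : Z, hmmG T (m * ℓ) z y z')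
      ≤ ∏ k ∈ Finset.range m,
          ∑ u : Z, ∑ z' : Z, hmmG T ℓ u (fun t => y (k * ℓ + t)) z' := by
  intro m
  induction m with
  | zero =>
      intro y z
      rw [Nat.zero_mul, Finset.range_zero, Finset.prod_empty]
      simp [hmmG]
  | succ m ih =>
      intro y z
      rw [Nat.succ_mul]
      have hsplit : (∑ z' : Z, hmmG T (m * ℓ + ℓ) z y z')
          = ∑ w : Z, hmmG T (m * ℓ) z y w *
              ∑ z' : Z, hmmG T ℓ w (fun t => y (m * ℓ + t)) z' := by
        simp only [hmmG_split T (m * ℓ) ℓ z y]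
        rw [Finset.sum_comm]
        exact Finset.sum_congr rfl fun w _ => (Finset.mul_sum ..).symm
      rw [hsplit, Finset.prod_range_succ]
      set S : ℝ := ∑ u : Z, ∑ z' : Z, hmmG T ℓ u (fun t => y (m * ℓ + t)) z' with hS
      have hSnn : 0 ≤ S := Finset.sum_nonneg fun u _ =>
        Finset.sum_nonneg fun z' _ => hmmG_nonneg T hT0 _ _ _ _
      have h1 : (∑ w : Z, hmmG T (m * ℓ) z y w *
            ∑ z' : Z, hmmG T ℓ w (fun t => y (m * ℓ + t)) z')
          ≤ (∑ w : Z, hmmG T (m * ℓ) z y w) * S := by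
        rw [Finset.sum_mul]
        refine Finset.sum_le_sum fun w _ => ?_
        refine mul_le_mul_of_nonneg_left ?_ (hmmG_nonneg T hT0 _ _ _ _)
        exact Finset.single_le_sum (f := fun u => ∑ z' : Z, hmmG T ℓ u (fun t => y (m * ℓ + t)) z')
          (fun u _ => Finset.sum_nonneg fun z' _ => hmmG_nonneg T hT0 _ _ _ _) (Finset.mem_univ w)
      refine h1.trans ?_
      exact mul_le_mul_of_nonneg_right (ih y z) hSnn

end HMM



set_option maxHeartbeats 1000000 in

/-- Hidden Markov (non-unifilar finite-state) source bound: let the source have `s`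
states with transition probabilities `T z x z' = P(x, z' | z)` and fixed initial state
`z1`, so `P(x^n) = ∑_{z_2,…,z_{n+1}} ∏_i T(z_i, x_i, z_{i+1})`.  If `n = m·ℓ` and
`Ĥ_ℓ(x^n)` is the empirical entropy (bits) of the non-overlapping `ℓ`-blocks of `x^n`,
then `P(x^n) ≤ 2^{-m[Ĥ_ℓ(x^n) - log₂(s³e)]}`, i.e.
`-log₂ P(x^n) ≥ m[Ĥ_ℓ(x^n) - log₂(s³e)]`. -/
theorem hidden_markov_prob_le_empirical_entropy {X Z : Type*} [Fintype X] [DecidableEq X]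
    [Fintype Z] (s ℓ m : ℕ) (hs : Fintype.card Z = s) (hℓ : 0 < ℓ) (hm : 0 < m)
    (T : Z → X → Z → ℝ) (hT0 : ∀ z a z', 0 ≤ T z a z')
    (hT1 : ∀ z, ∑ a : X, ∑ z' : Z, T z a z' = 1)
    (z1 : Z) (x : Fin (m * ℓ) → X) :
    let P : ℝ := ∑ zs : Fin (m * ℓ) → Z, ∏ i : Fin (m * ℓ),
      T ((Fin.cons z1 zs : Fin (m * ℓ + 1) → Z) i.castSucc) (x i) ((Fin.cons z1 zs : Fin (m * ℓ + 1) → Z) i.succ)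
    let B : Fin m → (Fin ℓ → X) := fun i j => x (finProdFinEquiv (i, j))
    let Phat : (Fin ℓ → X) → ℝ :=
      fun a => ((Finset.univ.filter fun i => B i = a).card : ℝ) / m
    let H : ℝ := -∑ a : Fin ℓ → X, Phat a * Real.logb 2 (Phat a)
    P ≤ (2 : ℝ) ^ (-((m : ℝ) * (H - Real.logb 2 ((s : ℝ) ^ 3 * Real.exp 1)))) := by
  intro P B Phat H
  classical
  have hmlpos : 0 < m * ℓ := Nat.mul_pos hm hℓ
  rcases isEmpty_or_nonempty Z with hZ | hZ
  · -- degenerate: no states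
    haveI : Nonempty (Fin (m * ℓ)) := ⟨⟨0, hmlpos⟩⟩
    haveI : IsEmpty (Fin (m * ℓ) → Z) := by infer_instance
    have : P = 0 := by
      show (∑ zs : Fin (m * ℓ) → Z, _) = 0
      rw [Finset.univ_eq_empty, Finset.sum_empty]
    rw [this]
    positivity
  · -- main case
    haveI : Inhabited X := ⟨x ⟨0, hmlpos⟩⟩
    have hs1 : 1 ≤ s := by rw [← hs]; exact Fintype.card_pos
    have hsR : (1 : ℝ) ≤ (s : ℝ) := by exact_mod_cast hs1
    -- extended sequence
    set y : ℕ → X := fun t => if h : t < m * ℓ then x ⟨t, h⟩ else default with hy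
    set ext : (Fin ℓ → X) → ℕ → X :=
      fun b t => if h : t < ℓ then b ⟨t, h⟩ else default with hext
    set R : (Fin ℓ → X) → ℝ :=
      fun b => ∑ u : Z, ∑ z' : Z, hmmG T ℓ u (ext b) z' with hR
    set c : (Fin ℓ → X) → ℕ :=
      fun a => (Finset.univ.filter fun k => B k = a).card with hc
    have hRnn : ∀ b, 0 ≤ R b := fun b => Finset.sum_nonneg fun u _ =>
      Finset.sum_nonneg fun z' _ => hmmG_nonneg T hT0 _ _ _ _
    -- Step 1: P as hmmG sum
    have hP : P = ∑ z' : Z, hmmG T (m * ℓ) z1 y z' := by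
      rw [← hmm_cons_sum T (m * ℓ) y z1]
      refine Finset.sum_congr rfl fun zs _ => Finset.prod_congr rfl fun i _ => ?_
      have : y i.val = x i := by
        rw [hy]; simp only []; rw [dif_pos i.isLt]
      rw [this]
    -- Step 2: block bound
    have hblocks : P ≤ ∏ k : Fin m, R (B k) := by
      rw [hP]
      refine (hmm_blocks T hT0 ℓ m y z1).trans ?_
      rw [← Fin.prod_univ_eq_prod_range fun k =>
        ∑ u : Z, ∑ z' : Z, hmmG T ℓ u (fun t => y (k * ℓ + t)) z']
      refine le_of_eq (Finset.prod_congr rfl fun k _ => ?_)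
      refine Finset.sum_congr rfl fun u _ => Finset.sum_congr rfl fun z' _ => ?_
      refine hmmG_congr T ℓ u _ _ z' fun t ht => ?_
      have hlt : (k : ℕ) * ℓ + t < m * ℓ := by
        have : (k : ℕ) + 1 ≤ m := k.isLt
        calc (k : ℕ) * ℓ + t < (k : ℕ) * ℓ + ℓ := by omega
          _ = ((k : ℕ) + 1) * ℓ := by ring
          _ ≤ m * ℓ := Nat.mul_le_mul_right ℓ k.isLt
      rw [hy, hext]
      simp only []
      rw [dif_pos hlt, dif_pos ht]
      show x _ = B k ⟨t, ht⟩
      have : (⟨(k : ℕ) * ℓ + t, hlt⟩ : Fin (m * ℓ)) = finProdFinEquiv (k, ⟨t, ht⟩) := by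
        apply Fin.ext
        show (k : ℕ) * ℓ + t = t + ℓ * (k : ℕ)
        ring
      rw [this]
    -- Step 3: total mass of R is s
    have hRsum : ∑ b : Fin ℓ → X, R b = s := by
      rw [hR]
      simp only []
      rw [Finset.sum_comm]
      have : ∀ u : Z, (∑ b : Fin ℓ → X, ∑ z' : Z, hmmG T ℓ u (ext b) z') = 1 := by
        intro u
        exact hmm_stoch T hT1 default ℓ u
      rw [Finset.sum_congr rfl fun u _ => this u]
      simp [hs]
    -- Step 4: counting
    have hcsum : ∑ a : Fin ℓ → X, c a = m := by
      rw [hc]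
      simp only []
      rw [← Finset.card_eq_sum_card_fiberwise (fun k _ => Finset.mem_univ (B k))]
      simp
    have hprodfib : ∏ k : Fin m, R (B k) = ∏ a : Fin ℓ → X, R a ^ c a := by
      rw [← Finset.prod_fiberwise_of_maps_to (fun k _ => Finset.mem_univ (B k)) fun k => R (B k)]
      refine Finset.prod_congr rfl fun a _ => ?_
      have : (∏ k ∈ Finset.univ.filter fun k => B k = a, R (B k))
          = ∏ k ∈ Finset.univ.filter fun k => B k = a, R a :=
        Finset.prod_congr rfl fun k hk => by rw [(Finset.mem_filter.mp hk).2]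
      rw [this, Finset.prod_const]
    -- Step 6: core AM-GM bound
    have hmR : (0:ℝ) < m := by exact_mod_cast hm
    have hcore : ∏ a : Fin ℓ → X, R a ^ c a
        ≤ (s : ℝ) ^ m * ∏ a : Fin ℓ → X, ((c a : ℝ) / m) ^ c a := by
      set supp := Finset.univ.filter fun a : Fin ℓ → X => c a ≠ 0 with hsupp
      have hmemc : ∀ a ∈ supp, (c a : ℝ) ≠ 0 := by
        intro a ha
        have : c a ≠ 0 := (Finset.mem_filter.mp ha).2
        exact_mod_cast this
      have hres1 : ∏ a ∈ supp, R a ^ c a = ∏ a : Fin ℓ → X, R a ^ c a :=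
        Finset.prod_subset (Finset.subset_univ _) (fun a _ ha => by
          have h0 : c a = 0 := by
            by_contra hne
            exact ha (Finset.mem_filter.mpr ⟨Finset.mem_univ a, hne⟩)
          rw [h0, pow_zero])
      have hres2 : ∏ a ∈ supp, ((c a : ℝ) / m) ^ c a
          = ∏ a : Fin ℓ → X, ((c a : ℝ) / m) ^ c a :=
        Finset.prod_subset (Finset.subset_univ _) (fun a _ ha => by
          have h0 : c a = 0 := by
            by_contra hne
            exact ha (Finset.mem_filter.mpr ⟨Finset.mem_univ a, hne⟩)
          rw [h0, pow_zero])
      have hwsum : ∑ a ∈ supp, ((c a : ℝ) / m) = 1 := by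
        have h1 : ∑ a ∈ supp, (c a : ℝ) = ∑ a : Fin ℓ → X, (c a : ℝ) :=
          Finset.sum_subset (Finset.subset_univ _) (fun a _ ha => by
            have h0 : c a = 0 := by
              by_contra hne
              exact ha (Finset.mem_filter.mpr ⟨Finset.mem_univ a, hne⟩)
            rw [h0, Nat.cast_zero])
        have h2 : ∑ a : Fin ℓ → X, (c a : ℝ) = (m : ℝ) := by
          rw [← Nat.cast_sum, hcsum]
        rw [← Finset.sum_div, h1, h2, div_self (ne_of_gt hmR)]
      have halg1 : ∀ (cr r : ℝ), cr ≠ 0 → (cr / m) * ((m : ℝ) * r / cr) = r := by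
        intro cr r hcr
        field_simp
      have halg2 : ∀ (cr r : ℝ), cr ≠ 0 → r = ((m : ℝ) * r / cr) * (cr / m) := by
        intro cr r hcr
        field_simp
      set zf : (Fin ℓ → X) → ℝ := fun a => (m : ℝ) * R a / c a with hzf
      have hznn : ∀ a, 0 ≤ zf a := fun a => by
        have := hRnn a
        rw [hzf]
        positivity
      have hgm := Real.geom_mean_le_arith_mean_weighted supp (fun a => (c a : ℝ) / m) zf
        (fun a _ => by positivity) hwsum (fun a _ => hznn a)
      have harith : ∑ a ∈ supp, ((c a : ℝ) / m) * zf a ≤ (s : ℝ) := by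
        have heq : ∀ a ∈ supp, ((c a : ℝ) / m) * zf a = R a :=
          fun a ha => halg1 _ _ (hmemc a ha)
        rw [Finset.sum_congr rfl heq, ← hRsum]
        exact Finset.sum_le_sum_of_subset_of_nonneg (Finset.subset_univ _)
          (fun b _ _ => hRnn b)
      have hgm2 : ∏ a ∈ supp, zf a ^ ((c a : ℝ) / m) ≤ (s : ℝ) := hgm.trans harith
      have hpow : (∏ a ∈ supp, zf a ^ ((c a : ℝ) / m)) ^ m ≤ (s : ℝ) ^ m :=
        pow_le_pow_left₀ (Finset.prod_nonneg fun a _ => Real.rpow_nonneg (hznn a) _)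
          hgm2 m
      have hlhs : (∏ a ∈ supp, zf a ^ ((c a : ℝ) / m)) ^ m = ∏ a ∈ supp, zf a ^ c a := by
        rw [← Finset.prod_pow]
        refine Finset.prod_congr rfl fun a ha => ?_
        rw [← Real.rpow_natCast (zf a ^ ((c a : ℝ) / m)) m, ← Real.rpow_mul (hznn a),
          div_mul_cancel₀ _ (ne_of_gt hmR), Real.rpow_natCast]
      have hfact : ∏ a ∈ supp, R a ^ c a
          = (∏ a ∈ supp, zf a ^ c a) * ∏ a ∈ supp, ((c a : ℝ) / m) ^ c a := by
        rw [← Finset.prod_mul_distrib]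
        refine Finset.prod_congr rfl fun a ha => ?_
        rw [← mul_pow]
        congr 1
        exact halg2 _ _ (hmemc a ha)
      calc ∏ a : Fin ℓ → X, R a ^ c a = ∏ a ∈ supp, R a ^ c a := hres1.symm
        _ = (∏ a ∈ supp, zf a ^ c a) * ∏ a ∈ supp, ((c a : ℝ) / m) ^ c a := hfact
        _ ≤ (s : ℝ) ^ m * ∏ a ∈ supp, ((c a : ℝ) / m) ^ c a := by
            refine mul_le_mul_of_nonneg_right ?_
              (Finset.prod_nonneg fun a _ => by positivity)
            rw [← hlhs]
            exact hpow
        _ = (s : ℝ) ^ m * ∏ a : Fin ℓ → X, ((c a : ℝ) / m) ^ c a := by rw [hres2]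
    -- Step 7: RHS identity
    have hrhs : (2 : ℝ) ^ (-((m : ℝ) * (H - Real.logb 2 ((s : ℝ) ^ 3 * Real.exp 1))))
        = ((s : ℝ) ^ 3 * Real.exp 1) ^ m * ∏ a : Fin ℓ → X, ((c a : ℝ) / m) ^ c a := by
      have h2pos : (0:ℝ) < 2 := two_pos
      have hse : (0:ℝ) < (s : ℝ) ^ 3 * Real.exp 1 := by positivity
      have hHdef : H = -∑ a : Fin ℓ → X, Phat a * Real.logb 2 (Phat a) := rfl
      have hPh : ∀ a : Fin ℓ → X, Phat a = (c a : ℝ) / m := fun a => rfl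
      have hsplit : -((m : ℝ) * (H - Real.logb 2 ((s : ℝ) ^ 3 * Real.exp 1)))
          = (m : ℝ) * Real.logb 2 ((s : ℝ) ^ 3 * Real.exp 1) + (-((m : ℝ) * H)) := by
        ring
      rw [hsplit, Real.rpow_add h2pos]
      congr 1
      · rw [mul_comm, Real.rpow_mul (le_of_lt h2pos),
          Real.rpow_logb h2pos (by norm_num) hse, Real.rpow_natCast]
      · have hH : -((m : ℝ) * H)
            = ∑ a : Fin ℓ → X, (c a : ℝ) * Real.logb 2 ((c a : ℝ) / m) := by
          rw [hHdef, mul_neg, neg_neg, Finset.mul_sum]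
          refine Finset.sum_congr rfl fun a _ => ?_
          rw [hPh a, ← mul_assoc, mul_comm (m : ℝ) ((c a : ℝ) / m),
            div_mul_cancel₀ _ (ne_of_gt hmR)]
        rw [hH]
        have hprod : (2:ℝ) ^ (∑ a : Fin ℓ → X, (c a : ℝ) * Real.logb 2 ((c a : ℝ) / m))
            = ∏ a : Fin ℓ → X, (2:ℝ) ^ ((c a : ℝ) * Real.logb 2 ((c a : ℝ) / m)) := by
          rw [Real.rpow_def_of_pos h2pos, Finset.mul_sum, Real.exp_sum]
          exact Finset.prod_congr rfl fun a _ => (Real.rpow_def_of_pos h2pos _).symm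
        rw [hprod]
        refine Finset.prod_congr rfl fun a _ => ?_
        rcases Nat.eq_zero_or_pos (c a) with h0 | hpos
        · rw [h0]
          norm_num
        · have hc0 : (0:ℝ) < (c a : ℝ) / m := by
            have hcp : (0:ℝ) < (c a : ℝ) := by exact_mod_cast hpos
            positivity
          rw [mul_comm ((c a : ℝ)) (Real.logb 2 ((c a : ℝ) / m)),
            Real.rpow_mul (by norm_num : (0:ℝ) ≤ 2),
            Real.rpow_logb h2pos (by norm_num) hc0, Real.rpow_natCast]
    -- combine
    rw [hrhs]
    refine hblocks.trans ?_
    rw [hprodfib]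
    refine hcore.trans ?_
    refine mul_le_mul_of_nonneg_right ?_ (Finset.prod_nonneg fun a _ => by positivity)
    refine pow_le_pow_left₀ (by positivity) ?_ m
    have he : (1:ℝ) ≤ Real.exp 1 := by
      have := Real.add_one_le_exp 1; linarith
    have h3 : (s:ℝ) ≤ (s:ℝ)^3 := le_self_pow₀ hsR (by norm_num)
    have h0 : (0:ℝ) ≤ (s:ℝ)^3 := by positivity
    nlinarith
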